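/- Let B₁ and B₂ be connected finite simple graphs, each with at least 2 vertices. Then the tensor product H(B₁) ⊗ H(B₂) of their hairings is not isomorphic to the hairing H(B) of any finite simple graph B. -/

import Mathlib

/-- The hairing of `G`: attach a pendant vertex to every vertex of `G`.
Vertices `(u, false)` form the original graph and `(u, true)` is the pendant at `u`. -/
def hairing {V : Type*} (G : SimpleGraph V) : SimpleGraph (V × Bool) where
  Adj a b := (a.2 = false ∧ b.2 = false ∧ G.Adj a.1 b.1) ∨ (a.1 = b.1 ∧ a.2 ≠ b.2)
  symm := by
    constructor
    rintro a b (⟨ha, hb, hadj⟩ | ⟨h1, h2⟩)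
    · exact Or.inl ⟨hb, ha, hadj.symm⟩
    · exact Or.inr ⟨h1.symm, h2.symm⟩
  loopless := by
    constructor
    rintro a (⟨_, _, hadj⟩ | ⟨_, h⟩)
    · exact G.loopless.1 _ hadj
    · exact h rfl

/-- The tensor (Kronecker/categorical) product of two simple graphs. -/
def tensorProd {V W : Type*} (G : SimpleGraph V) (G' : SimpleGraph W) :
    SimpleGraph (V × W) where
  Adj a b := G.Adj a.1 b.1 ∧ G'.Adj a.2 b.2
  symm := ⟨fun _ _ h => ⟨h.1.symm, h.2.symm⟩⟩
  loopless := ⟨fun a h => G.loopless.1 a.1 h.1⟩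

/-- A vertex with a unique neighbor. -/
def IsLeaf {V : Type*} (G : SimpleGraph V) (x : V) : Prop := ∃! y, G.Adj x y

lemma isLeaf_map {V W : Type*} {G : SimpleGraph V} {G' : SimpleGraph W}
    (e : G ≃g G') {x : V} (h : IsLeaf G x) : IsLeaf G' (e x) := by
  obtain ⟨y, hy, hu⟩ := h
  refine ⟨e y, e.map_adj_iff.mpr hy, ?_⟩
  intro z hz
  have h2 : G.Adj x (e.symm z) := by
    have := e.symm.map_adj_iff.mpr hz
    simpa using this
  have := hu _ h2
  rw [← this]
  simp

lemma isLeaf_iff_map {V W : Type*} {G : SimpleGraph V} {G' : SimpleGraph W}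
    (e : G ≃g G') (x : V) : IsLeaf G x ↔ IsLeaf G' (e x) := by
  refine ⟨isLeaf_map e, fun h => ?_⟩
  have := isLeaf_map e.symm h
  simpa using this

lemma isLeaf_tensor_iff {V W : Type*} (G : SimpleGraph V) (G' : SimpleGraph W)
    (x : V × W) : IsLeaf (tensorProd G G') x ↔ IsLeaf G x.1 ∧ IsLeaf G' x.2 := by
  constructor
  · rintro ⟨y, ⟨hy1, hy2⟩, hu⟩
    constructor
    · refine ⟨y.1, hy1, fun z hz => ?_⟩
      have := hu (z, y.2) ⟨hz, hy2⟩
      exact congrArg Prod.fst this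
    · refine ⟨y.2, hy2, fun z hz => ?_⟩
      have := hu (y.1, z) ⟨hy1, hz⟩
      exact congrArg Prod.snd this
  · rintro ⟨⟨y1, hy1, hu1⟩, ⟨y2, hy2, hu2⟩⟩
    refine ⟨(y1, y2), ⟨hy1, hy2⟩, ?_⟩
    rintro ⟨z1, z2⟩ ⟨hz1, hz2⟩
    exact Prod.ext (hu1 _ hz1) (hu2 _ hz2)

lemma pendant_isLeaf {V : Type*} (G : SimpleGraph V) (u : V) :
    IsLeaf (hairing G) (u, true) := by
  refine ⟨(u, false), Or.inr ⟨rfl, by simp⟩, ?_⟩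
  rintro ⟨z, b⟩ (⟨h, -, -⟩ | ⟨h1, h2⟩)
  · simp at h
  · cases b
    · exact Prod.ext h1.symm rfl
    · simp at h2

lemma isLeaf_hairing_iff {V : Type*} (G : SimpleGraph V)
    (hG : ∀ u, ∃ v, G.Adj u v) (x : V × Bool) :
    IsLeaf (hairing G) x ↔ x.2 = true := by
  obtain ⟨u, b⟩ := x
  cases b
  · simp only [Bool.false_eq_true, iff_false]
    rintro ⟨y, hy, hu⟩
    obtain ⟨v, hv⟩ := hG u
    have h1 : (hairing G).Adj (u, false) (v, false) := Or.inl ⟨rfl, rfl, hv⟩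
    have h2 : (hairing G).Adj (u, false) (u, true) := Or.inr ⟨rfl, by simp⟩
    have e1 := hu _ h1
    have e2 := hu _ h2
    rw [← e2] at e1
    simp at e1
  · simpa using pendant_isLeaf G u

lemma connected_exists_adj {V : Type*} [Finite V] {G : SimpleGraph V}
    (h : G.Connected) (hc : 2 ≤ Nat.card V) (u : V) : ∃ v, G.Adj u v := by
  have : Nontrivial V := Finite.one_lt_card_iff_nontrivial.mp (by omega)
  obtain ⟨v, hv⟩ := exists_ne u
  obtain ⟨w⟩ := (h.preconnected u v)
  cases w with
  | nil => exact absurd rfl hv.symm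
  | cons h' _ => exact ⟨_, h'⟩

/-- The tensor product of the hairings of two connected finite simple graphs, each with
at least 2 vertices, is not isomorphic to the hairing of any finite simple graph. -/
theorem tensorProd_hairings_not_hairing {V W : Type*} [Finite V] [Finite W]
    (B₁ : SimpleGraph V) (B₂ : SimpleGraph W)
    (h₁ : B₁.Connected) (h₂ : B₂.Connected)
    (hV : 2 ≤ Nat.card V) (hW : 2 ≤ Nat.card W) :
    ¬ ∃ (U : Type) (_ : Finite U) (B : SimpleGraph U),
        Nonempty (tensorProd (hairing B₁) (hairing B₂) ≃g hairing B) := by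
  rintro ⟨U, hU, B, ⟨e⟩⟩
  -- leaves of the tensor product are exactly the pendant×pendant vertices
  have hT : ∀ x : (V × Bool) × (W × Bool),
      IsLeaf (tensorProd (hairing B₁) (hairing B₂)) x ↔ x.1.2 = true ∧ x.2.2 = true := by
    intro x
    rw [isLeaf_tensor_iff,
      isLeaf_hairing_iff B₁ (connected_exists_adj h₁ hV),
      isLeaf_hairing_iff B₂ (connected_exists_adj h₂ hW)]
  -- the set of leaves of the tensor product is equinumerous with V × W
  have eq1 : Nat.card {x : (V × Bool) × (W × Bool) //
      IsLeaf (tensorProd (hairing B₁) (hairing B₂)) x} = Nat.card V * Nat.card W := by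
    rw [← Nat.card_prod]
    apply Nat.card_congr
    refine ⟨fun x => (x.1.1.1, x.1.2.1),
      fun p => ⟨((p.1, true), (p.2, true)), (hT _).mpr ⟨rfl, rfl⟩⟩, ?_, ?_⟩
    · rintro ⟨⟨⟨a, b⟩, ⟨c, d⟩⟩, hx⟩
      obtain ⟨hb, hd⟩ := (hT _).mp hx
      simp_all
    · rintro ⟨a, b⟩; rfl
  -- transport leaves across the isomorphism
  have eq2 : Nat.card {x : (V × Bool) × (W × Bool) //
      IsLeaf (tensorProd (hairing B₁) (hairing B₂)) x}
      = Nat.card {y : U × Bool // IsLeaf (hairing B) y} :=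
    Nat.card_congr (e.toEquiv.subtypeEquiv (fun x => isLeaf_iff_map e x))
  -- every pendant of `hairing B` is a leaf, so there are at least `Nat.card U` leaves
  have hinj : Function.Injective
      (fun u : U => (⟨(u, true), pendant_isLeaf B u⟩ : {y : U × Bool // IsLeaf (hairing B) y})) := by
    intro a b h
    simpa using congrArg (fun x => x.1.1) h
  have le1 : Nat.card U ≤ Nat.card {y : U × Bool // IsLeaf (hairing B) y} :=
    Nat.card_le_card_of_injective _ hinj
  -- cardinality bookkeeping
  have hcard : Nat.card ((V × Bool) × (W × Bool)) = Nat.card (U × Bool) :=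
    Nat.card_congr e.toEquiv
  have hb : Nat.card Bool = 2 := by simp [Nat.card_eq_fintype_card]
  simp only [Nat.card_prod, hb] at hcard
  have hV' : 2 ≤ Nat.card V := hV
  nlinarith [eq1, eq2, le1, hcard, hV, hW]
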